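/- Let (Ω,Σ,μ) be a σ-finite atomless measure space and let 0<α≤∞. Suppose u,v ∈ L₀(μ)⁺ satisfy u ∧ v = 0 and f ∈ L₀(0,∞)⁺ is such that ∫₀^t u*(s) ds ≤ ∫₀^t f*(s) ds and ∫₀^t v*(s) ds ≤ ∫₀^t f*(s) ds for all 0 ≤ t < α. Then ∫₀^t (u+v)*(s) ds ≤ ∫₀^t f*(s/2) ds for all 0 ≤ t < α. -/

import Mathlib

open MeasureTheory Filter ENNReal

/-- Decreasing rearrangement: `f*(t) = inf {s ≥ 0 : μ(|f| > s) ≤ t}`, valued in `ℝ≥0∞`. -/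
noncomputable def decRear {α : Type*} [MeasurableSpace α] (μ : Measure α) (f : α → ℝ)
    (t : ℝ) : ℝ≥0∞ :=
  sInf {s : ℝ≥0∞ | μ {x | s < (‖f x‖₊ : ℝ≥0∞)} ≤ ENNReal.ofReal t}


section helpers

lemma M1 (c : ℝ≥0∞) :
    (volume.restrict (Set.Ioi (0:ℝ))) {l : ℝ | ENNReal.ofReal l < c} = c := by
  rw [Measure.restrict_apply' measurableSet_Ioi]
  rcases eq_or_ne c ⊤ with rfl | hc
  · have h : {l : ℝ | ENNReal.ofReal l < ⊤} ∩ Set.Ioi 0 = Set.Ioi 0 := by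
      ext l; simp [ENNReal.ofReal_lt_top]
    rw [h, Real.volume_Ioi]
  · have h : {l : ℝ | ENNReal.ofReal l < c} ∩ Set.Ioi 0 = Set.Ioo 0 c.toReal := by
      ext l
      simp only [Set.mem_inter_iff, Set.mem_setOf_eq, Set.mem_Ioi, Set.mem_Ioo]
      constructor
      · rintro ⟨h1, h2⟩
        exact ⟨h2, (ENNReal.ofReal_lt_iff_lt_toReal h2.le hc).mp h1⟩
      · rintro ⟨h2, h1⟩
        exact ⟨(ENNReal.ofReal_lt_iff_lt_toReal h2.le hc).mpr h1, h2⟩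
    rw [h, Real.volume_Ioo, sub_zero, ENNReal.ofReal_toReal hc]

lemma M2 (t : ℝ) (ht : 0 ≤ t) (c : ℝ≥0∞) :
    volume ({s : ℝ | ENNReal.ofReal s < c} ∩ Set.Ioo 0 t) = min c (ENNReal.ofReal t) := by
  rcases le_or_gt (ENNReal.ofReal t) c with h | h
  · have heq : {s : ℝ | ENNReal.ofReal s < c} ∩ Set.Ioo 0 t = Set.Ioo 0 t := by
      ext s
      simp only [Set.mem_inter_iff, Set.mem_setOf_eq, Set.mem_Ioo]
      refine ⟨fun hx => hx.2, fun hx => ⟨lt_of_lt_of_le ?_ h, hx⟩⟩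
      exact (ENNReal.ofReal_lt_ofReal_iff (hx.1.trans hx.2)).mpr hx.2
    rw [heq, Real.volume_Ioo, sub_zero, min_eq_right h]
  · have hc : c ≠ ⊤ := (h.trans_le le_top).ne
    have hct : c.toReal < t := by
      rwa [ENNReal.lt_ofReal_iff_toReal_lt hc] at h
    have heq : {s : ℝ | ENNReal.ofReal s < c} ∩ Set.Ioo 0 t = Set.Ioo 0 c.toReal := by
      ext s
      simp only [Set.mem_inter_iff, Set.mem_setOf_eq, Set.mem_Ioo]
      constructor
      · rintro ⟨h1, h2, _⟩
        exact ⟨h2, (ENNReal.ofReal_lt_iff_lt_toReal h2.le hc).mp h1⟩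
      · rintro ⟨h2, h1⟩
        exact ⟨(ENNReal.ofReal_lt_iff_lt_toReal h2.le hc).mpr h1, h2, h1.trans hct⟩
    rw [heq, Real.volume_Ioo, sub_zero, ENNReal.ofReal_toReal hc, min_eq_left h.le]

lemma lemT (G : ℝ≥0∞ → ℝ≥0∞) (hG : Antitone G) (t : ℝ) (ht : 0 ≤ t) (F : ℝ → ℝ≥0∞)
    (hFG : ∀ s ∈ Set.Ioo (0:ℝ) t, ∀ l : ℝ, 0 < l →
      (ENNReal.ofReal l < F s ↔ ENNReal.ofReal s < G (ENNReal.ofReal l))) :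
    ∫⁻ s in Set.Ioo (0:ℝ) t, F s =
      ∫⁻ l in Set.Ioi (0:ℝ), min (G (ENNReal.ofReal l)) (ENNReal.ofReal t) := by
  have hGm : Measurable fun l : ℝ => G (ENNReal.ofReal l) :=
    (hG.comp_monotone (fun _ _ h => ENNReal.ofReal_le_ofReal h)).measurable
  set K : Set (ℝ × ℝ) := {p : ℝ × ℝ | ENNReal.ofReal p.1 < G (ENNReal.ofReal p.2)} with hK
  have hKm : MeasurableSet K :=
    measurableSet_lt (measurable_fst.ennreal_ofReal) (hGm.comp measurable_snd)
  have hkm : Measurable (K.indicator (1 : ℝ × ℝ → ℝ≥0∞)) := measurable_one.indicator hKm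
  calc ∫⁻ s in Set.Ioo (0:ℝ) t, F s
      = ∫⁻ s in Set.Ioo (0:ℝ) t, ∫⁻ l in Set.Ioi (0:ℝ),
          K.indicator (1 : ℝ × ℝ → ℝ≥0∞) (s, l) := by
        refine lintegral_congr_ae ?_
        filter_upwards [ae_restrict_mem measurableSet_Ioo] with s hs
        have hsl : MeasurableSet {l : ℝ | ENNReal.ofReal s < G (ENNReal.ofReal l)} :=
          measurableSet_lt measurable_const hGm
        have hfun : (fun l : ℝ => K.indicator (1 : ℝ × ℝ → ℝ≥0∞) (s, l)) =
            Set.indicator {l : ℝ | ENNReal.ofReal s < G (ENNReal.ofReal l)}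
              (1 : ℝ → ℝ≥0∞) := by
          funext l
          by_cases hmem : ENNReal.ofReal s < G (ENNReal.ofReal l) <;>
            simp [Set.indicator, hK, hmem]
        rw [hfun, lintegral_indicator_one hsl, Measure.restrict_apply' measurableSet_Ioi]
        have hseteq : {l : ℝ | ENNReal.ofReal s < G (ENNReal.ofReal l)} ∩ Set.Ioi 0
            = {l : ℝ | ENNReal.ofReal l < F s} ∩ Set.Ioi 0 := by
          ext l
          simp only [Set.mem_inter_iff, Set.mem_setOf_eq, Set.mem_Ioi]
          constructor
          · rintro ⟨h1, h2⟩; exact ⟨(hFG s hs l h2).mpr h1, h2⟩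
          · rintro ⟨h1, h2⟩; exact ⟨(hFG s hs l h2).mp h1, h2⟩
        rw [hseteq, ← Measure.restrict_apply' measurableSet_Ioi, M1]
    _ = ∫⁻ l in Set.Ioi (0:ℝ), ∫⁻ s in Set.Ioo (0:ℝ) t,
          K.indicator (1 : ℝ × ℝ → ℝ≥0∞) (s, l) := by
        exact lintegral_lintegral_swap hkm.aemeasurable
    _ = ∫⁻ l in Set.Ioi (0:ℝ), min (G (ENNReal.ofReal l)) (ENNReal.ofReal t) := by
        refine lintegral_congr fun l => ?_
        have hss : MeasurableSet {s : ℝ | ENNReal.ofReal s < G (ENNReal.ofReal l)} :=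
          measurableSet_lt measurable_id.ennreal_ofReal measurable_const
        have hfun : (fun s : ℝ => K.indicator (1 : ℝ × ℝ → ℝ≥0∞) (s, l)) =
            Set.indicator {s : ℝ | ENNReal.ofReal s < G (ENNReal.ofReal l)}
              (1 : ℝ → ℝ≥0∞) := by
          funext s
          by_cases hmem : ENNReal.ofReal s < G (ENNReal.ofReal l) <;>
            simp [Set.indicator, hK, hmem]
        rw [hfun, lintegral_indicator_one hss, Measure.restrict_apply' measurableSet_Ioo]
        exact M2 t ht _


lemma split_exists (P Q : ℝ≥0∞ → ℝ≥0∞) (hP : Antitone P) (hQ : Antitone Q)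
    (T : ℝ≥0∞) (hT : T ≠ ⊤) :
    ∃ A B : ℝ≥0∞, A + B = T ∧ A ≤ T ∧ B ≤ T ∧
      ∀ l, min (P l + Q l) T ≤ min (P l) A + min (Q l) B := by
  set S : Set ℝ≥0∞ := {l | P l + Q l ≤ T} with hS
  have hSup : ∀ l ∈ S, ∀ l', l ≤ l' → l' ∈ S := fun l hl l' h =>
    le_trans (add_le_add (hP h) (hQ h)) hl
  have hcomp : ∀ l ∈ S, ∀ l', l' ∉ S → l' ≤ l := by
    intro l hl l' hl'
    by_contra hc
    exact hl' (hSup l hl l' (not_le.mp hc).le)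
  set pp : ℝ≥0∞ := ⨆ l ∈ S, P l with hpp
  set qp : ℝ≥0∞ := ⨆ l ∈ S, Q l with hqp
  set pm : ℝ≥0∞ := ⨅ l ∈ Sᶜ, P l with hpm
  set qm : ℝ≥0∞ := ⨅ l ∈ Sᶜ, Q l with hqm
  have hppT : pp ≤ T := iSup₂_le fun l hl => le_trans le_self_add hl
  have hqpT : qp ≤ T := iSup₂_le fun l hl => le_trans le_add_self hl
  have hppm : pp ≤ pm := iSup₂_le fun l hl => le_iInf₂ fun l' hl' => hP (hcomp l hl l' hl')
  have hqqm : qp ≤ qm := iSup₂_le fun l hl => le_iInf₂ fun l' hl' => hQ (hcomp l hl l' hl')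
  -- pp + qp ≤ T
  have hpq : pp + qp ≤ T := by
    rcases S.eq_empty_or_nonempty with hE | hE
    · simp [hpp, hqp, hE]
    · have hne : Nonempty S := hE.to_subtype
      have h1 : pp = ⨆ l : S, P l := by rw [hpp, iSup_subtype']
      have h2 : qp = ⨆ l : S, Q l := by rw [hqp, iSup_subtype']
      rw [h1, h2, ENNReal.iSup_add]
      refine iSup_le fun l => ?_
      rw [ENNReal.add_iSup]
      refine iSup_le fun l' => ?_
      rcases le_total (l:ℝ≥0∞) (l':ℝ≥0∞) with hll | hll
      · exact le_trans (add_le_add le_rfl (hQ hll)) l.2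
      · exact le_trans (add_le_add (hP hll) le_rfl) l'.2
  -- T ≤ pm + qm
  have hTpq : T ≤ pm + qm := by
    by_contra hc
    push_neg at hc
    have hpmt : pm ≠ ⊤ := fun h => by simp [h] at hc
    have hqmt : qm ≠ ⊤ := fun h => by simp [h] at hc
    set ε : ℝ≥0∞ := (T - (pm + qm)) / 2 with hε
    have hε0 : ε ≠ 0 := by
      have h1 : 0 < T - (pm + qm) := tsub_pos_of_lt hc
      exact (ENNReal.div_pos h1.ne' ENNReal.ofNat_ne_top).ne'
    obtain ⟨l1, hl1S, hl1⟩ : ∃ l1 ∉ S, P l1 < pm + ε := by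
      have : pm < pm + ε := ENNReal.lt_add_right hpmt hε0
      rw [hpm] at this
      obtain ⟨l1, h1⟩ := iInf_lt_iff.mp this
      obtain ⟨hm, h2⟩ := iInf_lt_iff.mp h1
      exact ⟨l1, hm, h2⟩
    obtain ⟨l2, hl2S, hl2⟩ : ∃ l2 ∉ S, Q l2 < qm + ε := by
      have : qm < qm + ε := ENNReal.lt_add_right hqmt hε0
      rw [hqm] at this
      obtain ⟨l2, h1⟩ := iInf_lt_iff.mp this
      obtain ⟨hm, h2⟩ := iInf_lt_iff.mp h1
      exact ⟨l2, hm, h2⟩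
    set m := max l1 l2 with hm
    have hmS : m ∉ S := by
      rcases max_cases l1 l2 with ⟨h, _⟩ | ⟨h, _⟩ <;> rw [hm, h] <;> assumption
    have : P m + Q m < T := by
      calc P m + Q m ≤ P l1 + Q l2 :=
            add_le_add (hP (le_max_left _ _)) (hQ (le_max_right _ _))
        _ < (pm + ε) + (qm + ε) := ENNReal.add_lt_add hl1 hl2
        _ = (pm + qm) + (ε + ε) := by ring
        _ = (pm + qm) + (T - (pm + qm)) := by rw [hε, ENNReal.add_halves]
        _ = T := add_tsub_cancel_of_le hc.le
    exact hmS this.le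
  -- the split point
  refine ⟨min T (max pp (T - qm)), T - min T (max pp (T - qm)), ?_, min_le_left _ _,
    tsub_le_self, ?_⟩
  · exact add_tsub_cancel_of_le (min_le_left _ _)
  set A := min T (max pp (T - qm)) with hA
  set B := T - A with hB
  have hApp : pp ≤ A := le_min hppT (le_max_left _ _)
  have hAqm : T - qm ≤ A := le_min tsub_le_self (le_max_right _ _)
  have hApm : A ≤ pm := by
    refine le_trans (min_le_right _ _) (max_le hppm ?_)
    exact tsub_le_iff_right.mpr hTpq
  have hBqp : qp ≤ B := by
    have hAT : A ≠ ⊤ := ((min_le_left _ _).trans_lt (lt_top_iff_ne_top.mpr hT)).ne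
    refine ENNReal.le_sub_of_add_le_left hAT ?_
    have hAmax : A ≤ max pp (T - qm) := min_le_right _ _
    rcases max_cases pp (T - qm) with ⟨h, _⟩ | ⟨h, _⟩
    · rw [h] at hAmax
      exact le_trans (add_le_add hAmax le_rfl) hpq
    · rw [h] at hAmax
      calc A + qp ≤ (T - qm) + qp := add_le_add hAmax le_rfl
        _ ≤ (T - qp) + qp := add_le_add (tsub_le_tsub_left hqqm T) le_rfl
        _ = T := tsub_add_cancel_of_le hqpT
  have hBqm : B ≤ qm := by
    calc B ≤ T - (T - qm) := tsub_le_tsub_left hAqm T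
      _ ≤ qm := tsub_tsub_le
  intro l
  by_cases hl : l ∈ S
  · calc min (P l + Q l) T ≤ P l + Q l := min_le_left _ _
      _ ≤ min (P l) A + min (Q l) B := by
          refine add_le_add (le_min le_rfl ?_) (le_min le_rfl ?_)
          · exact le_trans (le_iSup₂ (f := fun l _ => P l) l hl) hApp
          · exact le_trans (le_iSup₂ (f := fun l _ => Q l) l hl) hBqp
  · have h1 : A ≤ P l := le_trans hApm (iInf₂_le l hl)
    have h2 : B ≤ Q l := le_trans hBqm (iInf₂_le l hl)
    calc min (P l + Q l) T ≤ T := min_le_right _ _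
      _ = A + B := (add_tsub_cancel_of_le (min_le_left _ _)).symm
      _ = min (P l) A + min (Q l) B := by rw [min_eq_right h1, min_eq_right h2]


variable {Ω : Type*} [MeasurableSpace Ω] (μ : Measure Ω)

lemma dist_anti (g : Ω → ℝ) :
    Antitone (fun l : ℝ≥0∞ => μ {x | l < (‖g x‖₊ : ℝ≥0∞)}) := fun a b hab =>
  measure_mono fun x hx => lt_of_le_of_lt hab hx

lemma decRear_le_iff (g : Ω → ℝ) (s : ℝ) (l : ℝ≥0∞) :
    decRear μ g s ≤ l ↔ μ {x | l < (‖g x‖₊ : ℝ≥0∞)} ≤ ENNReal.ofReal s := by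
  set S : Set ℝ≥0∞ := {s' : ℝ≥0∞ | μ {x | s' < (‖g x‖₊ : ℝ≥0∞)} ≤ ENNReal.ofReal s} with hS
  constructor
  · intro h
    have key : μ {x | sInf S < (‖g x‖₊ : ℝ≥0∞)} ≤ ENNReal.ofReal s := by
      rcases eq_or_ne (sInf S) ⊤ with htop | htop
      · rw [htop]
        have : {x | (⊤:ℝ≥0∞) < (‖g x‖₊ : ℝ≥0∞)} = ∅ := by
          ext x; simp [(ENNReal.coe_lt_top).not_gt]
        simp [this]
      · have hun : {x | sInf S < (‖g x‖₊ : ℝ≥0∞)} =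
            ⋃ n : ℕ, {x | sInf S + ((n:ℝ≥0∞))⁻¹ < (‖g x‖₊ : ℝ≥0∞)} := by
          ext x
          simp only [Set.mem_setOf_eq, Set.mem_iUnion]
          constructor
          · intro hx
            have hpos : 0 < (‖g x‖₊ : ℝ≥0∞) - sInf S := tsub_pos_of_lt hx
            obtain ⟨n, hn⟩ := ENNReal.exists_inv_nat_lt hpos.ne'
            exact ⟨n, lt_tsub_iff_left.mp hn⟩
          · rintro ⟨n, hn⟩
            exact lt_of_le_of_lt le_self_add hn
        have hmono : Monotone fun n : ℕ =>
            {x | sInf S + ((n:ℝ≥0∞))⁻¹ < (‖g x‖₊ : ℝ≥0∞)} := by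
          intro a b hab x hx
          simp only [Set.mem_setOf_eq] at hx ⊢
          exact lt_of_le_of_lt
            (add_le_add le_rfl (ENNReal.inv_le_inv.mpr (Nat.cast_le.mpr hab))) hx
        rw [hun, hmono.directed_le.measure_iUnion]
        refine iSup_le fun n => ?_
        have hlt : sInf S < sInf S + ((n:ℝ≥0∞))⁻¹ :=
          ENNReal.lt_add_right htop (by simp)
        obtain ⟨l', hl'S, hl'⟩ := sInf_lt_iff.mp hlt
        exact le_trans (dist_anti μ g hl'.le) hl'S
    exact le_trans (dist_anti μ g h) key
  · intro h
    exact sInf_le h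

lemma decRear_lt_iff (g : Ω → ℝ) (s : ℝ) (l : ℝ≥0∞) :
    l < decRear μ g s ↔ ENNReal.ofReal s < μ {x | l < (‖g x‖₊ : ℝ≥0∞)} := by
  rw [← not_le, ← not_le, decRear_le_iff]




variable {Ω : Type*} [MeasurableSpace Ω] (μ : Measure Ω)

lemma dist_add {u v : Ω → ℝ} (hv : AEMeasurable v μ)
    (hu0 : 0 ≤ᵐ[μ] u) (hv0 : 0 ≤ᵐ[μ] v)
    (hdisj : ∀ᵐ x ∂μ, min (u x) (v x) = 0) (l : ℝ≥0∞) :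
    μ {x | l < (‖(u + v) x‖₊ : ℝ≥0∞)} =
      μ {x | l < (‖u x‖₊ : ℝ≥0∞)} + μ {x | l < (‖v x‖₊ : ℝ≥0∞)} := by
  have hE : ∀ᵐ x ∂μ, min (u x) (v x) = 0 ∧ 0 ≤ u x ∧ 0 ≤ v x :=
    hdisj.and (hu0.and hv0)
  have hzero : ∀ x, min (u x) (v x) = 0 → 0 ≤ u x → 0 ≤ v x →
      u x = 0 ∨ v x = 0 := by
    intro x hmin h1 h2
    rcases le_total (u x) (v x) with h | h
    · left; rwa [min_eq_left h] at hmin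
    · right; rwa [min_eq_right h] at hmin
  have hBm' : NullMeasurableSet {x | l < (‖v x‖₊ : ℝ≥0∞)} μ := by
    have hm : AEMeasurable (fun x => (‖v x‖₊ : ℝ≥0∞)) μ := hv.enorm
    exact hm.nullMeasurable measurableSet_Ioi
  set A : Set Ω := {x | l < (‖u x‖₊ : ℝ≥0∞)} with hAdef
  set B : Set Ω := {x | l < (‖v x‖₊ : ℝ≥0∞)} with hBdef
  set C : Set Ω := A ∪ B with hCdef
  have hunion : ({x | l < (‖(u + v) x‖₊ : ℝ≥0∞)} : Set Ω) =ᵐ[μ] C := by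
    rw [eventuallyEq_set]
    filter_upwards [hE] with x hx
    obtain ⟨hmin, h1, h2⟩ := hx
    simp only [hCdef, hAdef, hBdef, Set.mem_setOf_eq, Set.mem_union, Pi.add_apply]
    rcases hzero x hmin h1 h2 with h | h <;> simp [h]
  have hdisj2 : AEDisjoint μ A B := by
    have h0 : μ {x | ¬(min (u x) (v x) = 0 ∧ 0 ≤ u x ∧ 0 ≤ v x)} = 0 := ae_iff.mp hE
    refine measure_mono_null ?_ h0
    rintro x ⟨hx1, hx2⟩ ⟨hmin, h1, h2⟩
    simp only [hAdef, hBdef, Set.mem_setOf_eq] at hx1 hx2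
    rcases hzero x hmin h1 h2 with h | h
    · rw [h] at hx1; simp at hx1
    · rw [h] at hx2; simp at hx2
  rw [measure_congr hunion, hCdef, measure_union₀ hBm' hdisj2]

lemma lemT' (g : Ω → ℝ) (r : ℝ) (hr : 0 ≤ r) :
    ∫⁻ s in Set.Ioo (0:ℝ) r, decRear μ g s =
      ∫⁻ l in Set.Ioi (0:ℝ),
        min (μ {x | ENNReal.ofReal l < (‖g x‖₊ : ℝ≥0∞)}) (ENNReal.ofReal r) :=
  lemT _ (dist_anti μ g) r hr _ (fun s _ l _ => decRear_lt_iff μ g s (ENNReal.ofReal l))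

lemma lemT2 (g : Ω → ℝ) (r : ℝ) (hr : 0 ≤ r) :
    ∫⁻ s in Set.Ioo (0:ℝ) r, decRear μ g (s/2) =
      ∫⁻ l in Set.Ioi (0:ℝ),
        min (2 * μ {x | ENNReal.ofReal l < (‖g x‖₊ : ℝ≥0∞)}) (ENNReal.ofReal r) := by
  refine lemT (fun l => 2 * μ {x | l < (‖g x‖₊ : ℝ≥0∞)})
    (fun a b hab => mul_le_mul_right (dist_anti μ g hab) 2) r hr _ ?_
  intro s _ l _
  rw [decRear_lt_iff]
  have h2 : ENNReal.ofReal s = 2 * ENNReal.ofReal (s/2) := by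
    rw [show (2:ℝ≥0∞) = ENNReal.ofReal 2 by simp,
      ← ENNReal.ofReal_mul (by norm_num : (0:ℝ) ≤ 2)]
    congr 1
    ring
  rw [h2]
  exact (ENNReal.mul_lt_mul_iff_right two_ne_zero ENNReal.ofNat_ne_top).symm


end helpers

/-- **Statement 9.** Let `(Ω,Σ,μ)` be a σ-finite atomless measure space and `0 < α ≤ ∞`.
Suppose `u, v ∈ L₀(μ)⁺` satisfy `u ∧ v = 0` and `f ∈ L₀(0,∞)⁺` is such that
`∫₀ᵗ u* ≤ ∫₀ᵗ f*` and `∫₀ᵗ v* ≤ ∫₀ᵗ f*` for all `0 ≤ t < α`.  Then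
`∫₀ᵗ (u+v)* (s) ds ≤ ∫₀ᵗ f*(s/2) ds` for all `0 ≤ t < α`. -/
theorem submajorization_of_disjoint_sum {Ω : Type*} [MeasurableSpace Ω] (μ : Measure Ω)
    [SigmaFinite μ] [NullSingletonClass μ] (α : ℝ≥0∞) (hα : 0 < α)
    (u v : Ω → ℝ) (hu : AEMeasurable u μ) (hv : AEMeasurable v μ)
    (hu0 : 0 ≤ᵐ[μ] u) (hv0 : 0 ≤ᵐ[μ] v)
    (hdisj : ∀ᵐ x ∂μ, min (u x) (v x) = 0)
    (f : ℝ → ℝ) (hf : AEMeasurable f (volume.restrict (Set.Ioi (0 : ℝ))))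
    (hf0 : 0 ≤ᵐ[volume.restrict (Set.Ioi (0 : ℝ))] f)
    (hmaju : ∀ t : ℝ, 0 ≤ t → ENNReal.ofReal t < α →
      ∫⁻ s in Set.Ioo (0 : ℝ) t, decRear μ u s ≤
        ∫⁻ s in Set.Ioo (0 : ℝ) t, decRear (volume.restrict (Set.Ioi (0 : ℝ))) f s)
    (hmajv : ∀ t : ℝ, 0 ≤ t → ENNReal.ofReal t < α →
      ∫⁻ s in Set.Ioo (0 : ℝ) t, decRear μ v s ≤
        ∫⁻ s in Set.Ioo (0 : ℝ) t, decRear (volume.restrict (Set.Ioi (0 : ℝ))) f s) :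
    ∀ t : ℝ, 0 ≤ t → ENNReal.ofReal t < α →
      ∫⁻ s in Set.Ioo (0 : ℝ) t, decRear μ (u + v) s ≤
        ∫⁻ s in Set.Ioo (0 : ℝ) t,
          decRear (volume.restrict (Set.Ioi (0 : ℝ))) f (s / 2) := by
  intro t ht htα
  obtain ⟨A, B, hAB, hA, hB, hpt⟩ :=
    split_exists (fun l => μ {x | l < (‖u x‖₊ : ℝ≥0∞)})
      (fun l => μ {x | l < (‖v x‖₊ : ℝ≥0∞)})
      (dist_anti μ u) (dist_anti μ v) (ENNReal.ofReal t) ofReal_ne_top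
  have hAne : A ≠ ⊤ := (lt_of_le_of_lt hA ofReal_lt_top).ne
  have hBne : B ≠ ⊤ := (lt_of_le_of_lt hB ofReal_lt_top).ne
  have hAr : ENNReal.ofReal A.toReal = A := ofReal_toReal hAne
  have hBr : ENNReal.ofReal B.toReal = B := ofReal_toReal hBne
  have hmU : Measurable fun l : ℝ => min (μ {x | ENNReal.ofReal l < (‖u x‖₊ : ℝ≥0∞)}) A := by
    have : Antitone fun l : ℝ => min (μ {x | ENNReal.ofReal l < (‖u x‖₊ : ℝ≥0∞)}) A :=
      fun a b hab => min_le_min (dist_anti μ u (ofReal_le_ofReal hab)) le_rfl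
    exact this.measurable
  have hmF : Measurable fun l : ℝ =>
      min ((volume.restrict (Set.Ioi (0:ℝ))) {x | ENNReal.ofReal l < (‖f x‖₊ : ℝ≥0∞)}) A := by
    have : Antitone fun l : ℝ =>
        min ((volume.restrict (Set.Ioi (0:ℝ))) {x | ENNReal.ofReal l < (‖f x‖₊ : ℝ≥0∞)}) A :=
      fun a b hab => min_le_min (dist_anti _ f (ofReal_le_ofReal hab)) le_rfl
    exact this.measurable
  have h1 : ∫⁻ l in Set.Ioi (0:ℝ), min (μ {x | ENNReal.ofReal l < (‖u x‖₊ : ℝ≥0∞)}) A ≤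
      ∫⁻ l in Set.Ioi (0:ℝ),
        min ((volume.restrict (Set.Ioi (0:ℝ))) {x | ENNReal.ofReal l < (‖f x‖₊ : ℝ≥0∞)}) A := by
    have hh := hmaju A.toReal ENNReal.toReal_nonneg
      (by rw [hAr]; exact lt_of_le_of_lt hA htα)
    rwa [lemT' μ u A.toReal ENNReal.toReal_nonneg,
      lemT' _ f A.toReal ENNReal.toReal_nonneg, hAr] at hh
  have h2 : ∫⁻ l in Set.Ioi (0:ℝ), min (μ {x | ENNReal.ofReal l < (‖v x‖₊ : ℝ≥0∞)}) B ≤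
      ∫⁻ l in Set.Ioi (0:ℝ),
        min ((volume.restrict (Set.Ioi (0:ℝ))) {x | ENNReal.ofReal l < (‖f x‖₊ : ℝ≥0∞)}) B := by
    have hh := hmajv B.toReal ENNReal.toReal_nonneg
      (by rw [hBr]; exact lt_of_le_of_lt hB htα)
    rwa [lemT' μ v B.toReal ENNReal.toReal_nonneg,
      lemT' _ f B.toReal ENNReal.toReal_nonneg, hBr] at hh
  calc ∫⁻ s in Set.Ioo (0:ℝ) t, decRear μ (u + v) s
      = ∫⁻ l in Set.Ioi (0:ℝ),
          min (μ {x | ENNReal.ofReal l < (‖u x‖₊ : ℝ≥0∞)} +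
            μ {x | ENNReal.ofReal l < (‖v x‖₊ : ℝ≥0∞)}) (ENNReal.ofReal t) := by
        rw [lemT' μ (u + v) t ht]
        exact lintegral_congr fun l => by rw [dist_add μ hv hu0 hv0 hdisj]
    _ ≤ ∫⁻ l in Set.Ioi (0:ℝ),
          (min (μ {x | ENNReal.ofReal l < (‖u x‖₊ : ℝ≥0∞)}) A +
           min (μ {x | ENNReal.ofReal l < (‖v x‖₊ : ℝ≥0∞)}) B) :=
        lintegral_mono fun l => hpt _
    _ = (∫⁻ l in Set.Ioi (0:ℝ), min (μ {x | ENNReal.ofReal l < (‖u x‖₊ : ℝ≥0∞)}) A) +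
        ∫⁻ l in Set.Ioi (0:ℝ), min (μ {x | ENNReal.ofReal l < (‖v x‖₊ : ℝ≥0∞)}) B :=
        lintegral_add_left hmU _
    _ ≤ (∫⁻ l in Set.Ioi (0:ℝ),
          min ((volume.restrict (Set.Ioi (0:ℝ))) {x | ENNReal.ofReal l < (‖f x‖₊ : ℝ≥0∞)}) A) +
        ∫⁻ l in Set.Ioi (0:ℝ),
          min ((volume.restrict (Set.Ioi (0:ℝ))) {x | ENNReal.ofReal l < (‖f x‖₊ : ℝ≥0∞)}) B :=
        add_le_add h1 h2
    _ = ∫⁻ l in Set.Ioi (0:ℝ),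
          (min ((volume.restrict (Set.Ioi (0:ℝ))) {x | ENNReal.ofReal l < (‖f x‖₊ : ℝ≥0∞)}) A +
           min ((volume.restrict (Set.Ioi (0:ℝ))) {x | ENNReal.ofReal l < (‖f x‖₊ : ℝ≥0∞)}) B) :=
        (lintegral_add_left hmF _).symm
    _ ≤ ∫⁻ l in Set.Ioi (0:ℝ),
          min (2 * (volume.restrict (Set.Ioi (0:ℝ))) {x | ENNReal.ofReal l < (‖f x‖₊ : ℝ≥0∞)})
            (ENNReal.ofReal t) := by
        refine lintegral_mono fun l => ?_
        rw [← hAB]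
        refine le_min ?_ (add_le_add (min_le_right _ _) (min_le_right _ _))
        refine le_trans (add_le_add (min_le_left _ _) (min_le_left _ _)) ?_
        rw [two_mul]
    _ = ∫⁻ s in Set.Ioo (0:ℝ) t,
          decRear (volume.restrict (Set.Ioi (0:ℝ))) f (s / 2) :=
        (lemT2 _ f t ht).symm
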